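/- Let p be a prime and n, k, r positive integers with p^r > 2. The number M of tuples (k_1,...,k_n) of nonnegative integers with k_1+···+k_n = k, k_1+2k_2+···+n·k_n = n, and (k_1+···+k_n)!/(k_1!···k_n!) = p^r equals δ_{p^r,k}·(⌊(n−1)/(p^r−1)⌋ − δ_{0, n mod p^r}), where δ is the Kronecker delta. -/

import Mathlib

open Finset

lemma le_choose_aux : ∀ m j : ℕ, 0 < j → j < m → m ≤ m.choose j := by
  intro m
  induction m with
  | zero => omega
  | succ m ih =>
    intro j h0 hjm
    obtain ⟨j, rfl⟩ : ∃ j', j = j' + 1 := ⟨j - 1, by omega⟩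
    rw [Nat.choose_succ_succ]
    simp only [Nat.succ_eq_add_one]
    rcases Nat.eq_zero_or_pos j with rfl | hj
    · simp
    rcases eq_or_lt_of_le (Nat.lt_succ_iff.mp hjm) with rfl | hjm'
    · rw [Nat.choose_self]
      have h := Nat.choose_symm (n := j+1) (k := j) (by omega)
      rw [show j + 1 - j = 1 by omega, Nat.choose_one_right] at h
      omega
    · have h1 := ih j hj (by omega)
      have h2 := Nat.choose_pos (n := m) (k := j + 1) (by omega)
      omega

lemma choose_prime_pow {p m j t : ℕ} (hp : p.Prime) (h : m.choose j = p ^ t)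
    (h0 : 0 < j) (hjm : j < m) (ht : 0 < t) : m = p ^ t ∧ (j = 1 ∨ j = m - 1) := by
  have hle : m ≤ p ^ t := h ▸ le_choose_aux m j h0 hjm
  have hdvd : p ^ t ∣ m.choose j := h ▸ dvd_rfl
  have hfac : t ≤ (m.choose j).factorization p :=
    (Nat.Prime.pow_dvd_iff_le_factorization hp
      (by rw [h]; exact (pow_pos hp.pos t).ne')).mp hdvd
  have hge : p ^ t ≤ m := le_trans
    (Nat.pow_le_pow_right hp.one_lt.le hfac)
    (Nat.pow_factorization_choose_le (by omega))
  have hm : m = p ^ t := le_antisymm hle hge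
  refine ⟨hm, ?_⟩
  by_contra hcon
  push_neg at hcon
  obtain ⟨hj1, hjm1⟩ := hcon
  have h2j : 2 ≤ j := by omega
  have hjm2 : j ≤ m - 2 := by omega
  obtain ⟨m', rfl⟩ : ∃ m', m = m' + 1 := ⟨m - 1, by omega⟩
  obtain ⟨j', rfl⟩ : ∃ j', j = j' + 1 := ⟨j - 1, by omega⟩
  rw [Nat.choose_succ_succ] at h
  have hb1 : m' ≤ m'.choose j' := le_choose_aux m' j' (by omega) (by omega)
  have hb2 : m' ≤ m'.choose (j' + 1) := le_choose_aux m' (j' + 1) (by omega) (by omega)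
  have : m' + 1 = p ^ t := by omega
  simp only [Nat.succ_eq_add_one] at h
  omega

lemma one_lt_multinomial {ι : Type*} [DecidableEq ι] {s : Finset ι} {f : ι → ℕ} {a b : ι}
    (ha : a ∈ s) (hb : b ∈ s) (hab : a ≠ b) (hfa : 0 < f a) (hfb : 0 < f b) :
    1 < Nat.multinomial s f := by
  have hdec : Nat.multinomial s f
      = (f a + ∑ i ∈ s.erase a, f i).choose (f a) * Nat.multinomial (s.erase a) f := by
    conv_lhs => rw [← Finset.insert_erase ha]
    exact Nat.multinomial_insert (Finset.notMem_erase a s) f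
  have hbe : b ∈ s.erase a := Finset.mem_erase.mpr ⟨Ne.symm hab, hb⟩
  have hS : f b ≤ ∑ i ∈ s.erase a, f i := Finset.single_le_sum (fun i _ => Nat.zero_le _) hbe
  have hch : f a + ∑ i ∈ s.erase a, f i ≤ (f a + ∑ i ∈ s.erase a, f i).choose (f a) :=
    le_choose_aux _ _ hfa (by omega)
  have hpos := Nat.multinomial_pos (s.erase a) f
  calc 1 < (f a + ∑ i ∈ s.erase a, f i).choose (f a) * 1 := by omega
    _ ≤ _ := by rw [hdec]; exact Nat.mul_le_mul_left _ hpos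

lemma key_multinomial {ι : Type*} [DecidableEq ι] {p : ℕ} (hp : p.Prime) :
    ∀ s : Finset ι, ∀ (f : ι → ℕ) (t : ℕ), 0 < t → (∀ i ∈ s, 0 < f i) → 2 ≤ s.card →
      Nat.multinomial s f = p ^ t →
      (∑ i ∈ s, f i) = p ^ t ∧ s.card = 2 ∧ ∃ a ∈ s, f a = 1 := by
  intro s
  induction s using Finset.strongInduction with
  | _ s ih =>
    intro f t ht hpos hcard hmul
    obtain ⟨a, ha⟩ : s.Nonempty := Finset.card_pos.mp (by omega)
    have hdec : Nat.multinomial s f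
        = (f a + ∑ i ∈ s.erase a, f i).choose (f a) * Nat.multinomial (s.erase a) f := by
      conv_lhs => rw [← Finset.insert_erase ha]
      exact Nat.multinomial_insert (Finset.notMem_erase a s) f
    have hsum' : f a + ∑ i ∈ s.erase a, f i = ∑ i ∈ s, f i := Finset.add_sum_erase s f ha
    rw [hdec] at hmul
    obtain ⟨u, hu, hcu⟩ := (Nat.dvd_prime_pow hp).mp ⟨_, hmul.symm⟩
    obtain ⟨v, hv, hvv⟩ := (Nat.dvd_prime_pow hp).mp
      (show Nat.multinomial (s.erase a) f ∣ p ^ t from ⟨_, by rw [← hmul, mul_comm]⟩)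
    have huv : u + v = t := Nat.pow_right_injective hp.two_le
      (by show p ^ (u + v) = p ^ t; rw [pow_add, ← hcu, ← hvv, hmul])
    have hfa : 0 < f a := hpos a ha
    by_cases hc2 : s.card = 2
    · have hc1 : (s.erase a).card = 1 := by rw [Finset.card_erase_of_mem ha]; omega
      obtain ⟨b, hb⟩ := Finset.card_eq_one.mp hc1
      have hM1 : Nat.multinomial (s.erase a) f = 1 := by rw [hb]; simp
      have hC : (f a + ∑ i ∈ s.erase a, f i).choose (f a) = p ^ t := by
        rw [hM1, mul_one] at hmul; exact hmul
      have hbs : b ∈ s := Finset.mem_of_mem_erase (hb ▸ Finset.mem_singleton_self b)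
      have hfb : 0 < f b := hpos b hbs
      have hSb : ∑ i ∈ s.erase a, f i = f b := by rw [hb, Finset.sum_singleton]
      rw [hSb] at hC hsum'
      obtain ⟨hm, hj⟩ := choose_prime_pow hp hC hfa (by omega) ht
      refine ⟨by omega, hc2, ?_⟩
      rcases hj with hj | hj
      · exact ⟨a, ha, hj⟩
      · exact ⟨b, hbs, by omega⟩
    · have hc3 : 3 ≤ s.card := by omega
      have hce : 2 ≤ (s.erase a).card := by rw [Finset.card_erase_of_mem ha]; omega
      obtain ⟨b, hb, c, hc, hbc⟩ := Finset.one_lt_card.mp (by omega : 1 < (s.erase a).card)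
      have hbs := Finset.mem_of_mem_erase hb
      have hcs := Finset.mem_of_mem_erase hc
      have hM2 : 1 < Nat.multinomial (s.erase a) f :=
        one_lt_multinomial hb hc hbc (hpos b hbs) (hpos c hcs)
      have hv1 : 1 ≤ v := by
        rcases Nat.eq_zero_or_pos v with rfl | h
        · rw [pow_zero] at hvv; omega
        · exact h
      have hS2 : 2 ≤ ∑ i ∈ s.erase a, f i := by
        have h1 : f b + f c ≤ ∑ i ∈ s.erase a, f i := by
          rw [← Finset.sum_pair hbc]
          exact Finset.sum_le_sum_of_subset (by
            intro x hx
            simp only [Finset.mem_insert, Finset.mem_singleton] at hx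
            rcases hx with rfl | rfl <;> assumption)
        have := hpos b hbs
        have := hpos c hcs
        omega
      have hu1 : 1 ≤ u := by
        rcases Nat.eq_zero_or_pos u with rfl | h
        · rw [pow_zero] at hcu
          have := le_choose_aux (f a + ∑ i ∈ s.erase a, f i) (f a) hfa (by omega)
          omega
        · exact h
      obtain ⟨hm, hj⟩ := choose_prime_pow hp hcu hfa (by omega) hu1
      have hfa1 : f a = 1 := by rcases hj with hj | hj <;> omega
      obtain ⟨hs', _, _⟩ := ih (s.erase a) (Finset.erase_ssubset ha) f v hv1
        (fun i hi => hpos i (Finset.mem_of_mem_erase hi)) hce hvv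
      -- p divides both p^u = 1 + p^v and p^v, contradiction
      have hpu : p ∣ p ^ u := dvd_pow_self p (by omega)
      have hpv : p ∣ p ^ v := dvd_pow_self p (by omega)
      rw [← hm, hfa1, hs'] at hpu
      have : p ∣ 1 := by
        have := Nat.dvd_sub hpu hpv
        simpa using this
      have := Nat.le_of_dvd one_pos this
      have := hp.two_le
      omega

lemma member_struct {p n k r : ℕ} (hp : p.Prime) (hn : 0 < n) (hk : 0 < k) (hr : 0 < r)
    (hpr : 2 < p ^ r) (f : Fin n → ℕ)
    (h1 : (∑ i, f i) = k) (h2 : (∑ i : Fin n, (i.1 + 1) * f i) = n)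
    (h3 : (∑ i, f i).factorial / ∏ i, (f i).factorial = p ^ r) :
    k = p ^ r ∧ ∃ a b : Fin n, a ≠ b ∧ f a = 1 ∧ f b = p ^ r - 1 ∧
      (∀ i, i ≠ a → i ≠ b → f i = 0) ∧ (b.1 + 1) * (p ^ r - 1) + (a.1 + 1) = n := by
  classical
  set s : Finset (Fin n) := Finset.univ.filter (fun i => f i ≠ 0) with hs
  have hsub : s ⊆ Finset.univ := Finset.filter_subset _ _
  have hzero : ∀ i ∈ Finset.univ, i ∉ s → f i = 0 := by
    intro i _ hi
    by_contra hne
    exact hi (by simp [hs, hne])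
  have hsum : ∑ i ∈ s, f i = ∑ i, f i := Finset.sum_subset hsub hzero
  have hprod : ∏ i ∈ s, (f i).factorial = ∏ i, (f i).factorial :=
    Finset.prod_subset hsub (fun i hi hni => by rw [hzero i hi hni]; rfl)
  have hmulu : Nat.multinomial Finset.univ f = p ^ r := h3
  have hmul : Nat.multinomial s f = p ^ r := by
    unfold Nat.multinomial at hmulu ⊢
    rw [hsum, hprod]; exact hmulu
  have hpos : ∀ i ∈ s, 0 < f i := by
    intro i hi
    have : f i ≠ 0 := by simpa [hs] using hi
    omega
  have hcard : 2 ≤ s.card := by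
    by_contra hcon
    push_neg at hcon
    rcases Nat.le_one_iff_eq_zero_or_eq_one.mp (by omega : s.card ≤ 1) with h0 | h1'
    · rw [Finset.card_eq_zero.mp h0, Finset.sum_empty] at hsum
      omega
    · obtain ⟨x, hx⟩ := Finset.card_eq_one.mp h1'
      rw [hx, Nat.multinomial_singleton] at hmul
      omega
  obtain ⟨hsumq, hc2, a, haS, hfa⟩ := key_multinomial hp s f r hr hpos hcard hmul
  have hkq : k = p ^ r := by rw [← h1, ← hsum, hsumq]
  have hc1 : (s.erase a).card = 1 := by rw [Finset.card_erase_of_mem haS]; omega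
  obtain ⟨b, hb⟩ := Finset.card_eq_one.mp hc1
  have hbe : b ∈ s.erase a := hb ▸ Finset.mem_singleton_self b
  have hba : b ≠ a := (Finset.mem_erase.mp hbe).1
  have hbs : b ∈ s := Finset.mem_of_mem_erase hbe
  have hadd : f a + ∑ i ∈ s.erase a, f i = ∑ i ∈ s, f i := Finset.add_sum_erase s f haS
  rw [hb, Finset.sum_singleton] at hadd
  have hfb : f b = p ^ r - 1 := by omega
  have hmem : ∀ i, i ∈ s → i = a ∨ i = b := by
    intro i hi
    by_cases hia : i = a
    · exact Or.inl hia
    · have : i ∈ s.erase a := Finset.mem_erase.mpr ⟨hia, hi⟩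
      rw [hb, Finset.mem_singleton] at this
      exact Or.inr this
  have hout : ∀ i, i ≠ a → i ≠ b → f i = 0 := by
    intro i hia hib
    by_contra hne
    have hi : i ∈ s := by simp [hs, hne]
    rcases hmem i hi with h | h <;> [exact hia h; exact hib h]
  refine ⟨hkq, a, b, hba.symm, hfa, hfb, hout, ?_⟩
  have hsum2 : ∑ i ∈ s, (i.1 + 1) * f i = n := by
    rw [Finset.sum_subset hsub (fun i hi hni => by rw [hzero i hi hni, mul_zero])]
    exact h2
  have hsab : s = {a, b} := by
    rw [← Finset.insert_erase haS, hb]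
  rw [hsab, Finset.sum_insert (by simp [hba.symm]), Finset.sum_singleton, hfa, hfb] at hsum2
  omega

lemma mk_member {p n r : ℕ} (hpr : 2 < p ^ r) (a b : Fin n) (hab : a ≠ b)
    (hcon : (a.1 + 1) * (p ^ r - 1) + (b.1 + 1) = n) :
    (∑ i, (fun i => if i = a then p ^ r - 1 else if i = b then 1 else 0) i) = p ^ r ∧
    (∑ i : Fin n, (i.1 + 1) * (fun i => if i = a then p ^ r - 1 else if i = b then 1 else 0) i) = n ∧
    (∑ i, (fun i => if i = a then p ^ r - 1 else if i = b then 1 else 0) i).factorial /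
      ∏ i, ((fun i => if i = a then p ^ r - 1 else if i = b then 1 else 0) i).factorial = p ^ r := by
  classical
  set f : Fin n → ℕ := fun i => if i = a then p ^ r - 1 else if i = b then 1 else 0 with hf
  have hsum : (∑ i, f i) = p ^ r := by
    have : ∀ i, f i = (if i = a then p ^ r - 1 else 0) + (if i = b then 1 else 0) := by
      intro i
      by_cases hia : i = a
      · subst hia; simp [hf, hab]
      · by_cases hib : i = b <;> simp [hf, hia, hib, Ne.symm hab]
    rw [Finset.sum_congr rfl (fun i _ => this i), Finset.sum_add_distrib]
    simp
    omega
  have hwsum : (∑ i : Fin n, (i.1 + 1) * f i) = n := by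
    have : ∀ i : Fin n, (i.1 + 1) * f i =
        (if i = a then (a.1 + 1) * (p ^ r - 1) else 0) + (if i = b then b.1 + 1 else 0) := by
      intro i
      by_cases hia : i = a
      · subst hia; simp [hf, hab]
      · by_cases hib : i = b
        · subst hib; simp [hf, hia]
        · simp [hf, hia, hib]
    rw [Finset.sum_congr rfl (fun i _ => this i), Finset.sum_add_distrib]
    simp
    omega
  have hprod : (∏ i, (f i).factorial) = (p ^ r - 1).factorial := by
    have : ∀ i, (f i).factorial = if i = a then (p ^ r - 1).factorial else 1 := by
      intro i
      by_cases hia : i = a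
      · simp [hf, hia]
      · by_cases hib : i = b <;> simp [hf, hia, hib, Ne.symm hab]
    rw [Finset.prod_congr rfl (fun i _ => this i), Finset.prod_ite_eq' Finset.univ a]
    simp
  refine ⟨hsum, hwsum, ?_⟩
  rw [hsum, hprod]
  have hfact : (p ^ r).factorial = p ^ r * (p ^ r - 1).factorial := by
    conv_lhs => rw [show p ^ r = (p ^ r - 1) + 1 by omega]
    rw [Nat.factorial_succ]
    congr 1
    omega
  rw [hfact, Nat.mul_div_assoc _ dvd_rfl, Nat.div_self (Nat.factorial_pos _), mul_one]

lemma count_range {n q : ℕ} (hn : 0 < n) (hq : 2 < q) :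
    ((Finset.range n).filter (fun a => (a + 1) * (q - 1) < n ∧ (a + 1) * q ≠ n)).card
      = (n - 1) / (q - 1) - (if n % q = 0 then 1 else 0) := by
  set D := (n - 1) / (q - 1) with hD
  have hDn : D < n := lt_of_le_of_lt (Nat.div_le_self _ _) (by omega)
  have hiff : ∀ a, ((a + 1) * (q - 1) < n ↔ a < D) := by
    intro a
    have h := Nat.le_div_iff_mul_le (k := q - 1) (by omega : 0 < q - 1) (x := a + 1) (y := n - 1)
    rw [hD]
    omega
  have hstep1 : (Finset.range n).filter (fun a => (a + 1) * (q - 1) < n ∧ (a + 1) * q ≠ n)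
      = (Finset.range D).filter (fun a => (a + 1) * q ≠ n) := by
    ext a
    simp only [Finset.mem_filter, Finset.mem_range]
    have := hiff a
    constructor
    · rintro ⟨_, h2, h3⟩; exact ⟨by omega, h3⟩
    · rintro ⟨h2, h3⟩; exact ⟨by omega, by omega, h3⟩
  rw [hstep1]
  have hsplit := Finset.card_filter_add_card_filter_not
    (s := Finset.range D) (p := fun a => (a + 1) * q = n)
  simp only [Finset.card_range] at hsplit
  have hE : ((Finset.range D).filter (fun a => (a + 1) * q = n)).card
      = if n % q = 0 then 1 else 0 := by
    by_cases hdvd : n % q = 0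
    · rw [if_pos hdvd]
      have hqd : q ∣ n := Nat.dvd_of_mod_eq_zero hdvd
      have hqn : q ≤ n := Nat.le_of_dvd hn hqd
      have hnq1 : 1 ≤ n / q := (Nat.one_le_div_iff (by omega)).mpr hqn
      have hmulid : n / q * q = n := Nat.div_mul_cancel hqd
      have hsucc : n / q * (q - 1) + n / q = n / q * q := by
        rw [← Nat.mul_succ]
        congr 1
        omega
      have hlt : n / q - 1 < D := by
        have h := Nat.le_div_iff_mul_le (k := q - 1) (by omega : 0 < q - 1)
          (x := n / q) (y := n - 1)
        rw [hD]
        omega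
      have : ((Finset.range D).filter (fun a => (a + 1) * q = n)) = {n / q - 1} := by
        ext a
        simp only [Finset.mem_filter, Finset.mem_range, Finset.mem_singleton]
        constructor
        · rintro ⟨ha, hEq⟩
          have : n / q = a + 1 := Nat.div_eq_of_eq_mul_left (by omega) hEq.symm
          omega
        · rintro rfl
          refine ⟨hlt, ?_⟩
          rw [show n / q - 1 + 1 = n / q by omega]
          exact hmulid
      rw [this, Finset.card_singleton]
    · rw [if_neg hdvd]
      rw [Finset.card_eq_zero, Finset.filter_eq_empty_iff]
      intro a _ hEq
      exact hdvd (by rw [← hEq, Nat.mul_mod_left])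
  have hnotc : ((Finset.range D).filter (fun a => ¬ (a + 1) * q = n)).card
      = ((Finset.range D).filter (fun a => (a + 1) * q ≠ n)).card := rfl
  omega

theorem merca_conjecture (p n k r : ℕ) (hp : p.Prime)
    (hn : 0 < n) (hk : 0 < k) (hr : 0 < r) (hpr : 2 < p ^ r) :
    Nat.card {f : Fin n → ℕ //
        (∑ i, f i) = k ∧ (∑ i : Fin n, (i.1 + 1) * f i) = n ∧
        (∑ i, f i).factorial / ∏ i, (f i).factorial = p ^ r}
      = (if k = p ^ r then 1 else 0) *
        ((n - 1) / (p ^ r - 1) - if n % p ^ r = 0 then 1 else 0) := by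
  by_cases hkq : k = p ^ r
  case neg =>
    haveI : IsEmpty {f : Fin n → ℕ //
        (∑ i, f i) = k ∧ (∑ i : Fin n, (i.1 + 1) * f i) = n ∧
        (∑ i, f i).factorial / ∏ i, (f i).factorial = p ^ r} :=
      ⟨fun ⟨f, h1, h2, h3⟩ => hkq (member_struct hp hn hk hr hpr f h1 h2 h3).1⟩
    rw [Nat.card_of_isEmpty, if_neg hkq, zero_mul]
  case pos =>
    subst hkq
    rw [if_pos rfl, one_mul]
    have hGmem : ∀ x : {a : Fin n // (a.1 + 1) * (p ^ r - 1) < n ∧ (a.1 + 1) * p ^ r ≠ n},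
        (∑ i, (fun i => if i = x.1 then p ^ r - 1
            else if i.1 + 1 = n - (x.1.1 + 1) * (p ^ r - 1) then 1 else 0) i) = p ^ r ∧
        (∑ i : Fin n, (i.1 + 1) * (fun i => if i = x.1 then p ^ r - 1
            else if i.1 + 1 = n - (x.1.1 + 1) * (p ^ r - 1) then 1 else 0) i) = n ∧
        (∑ i, (fun i => if i = x.1 then p ^ r - 1
            else if i.1 + 1 = n - (x.1.1 + 1) * (p ^ r - 1) then 1 else 0) i).factorial /
          ∏ i, ((fun i => if i = x.1 then p ^ r - 1
            else if i.1 + 1 = n - (x.1.1 + 1) * (p ^ r - 1) then 1 else 0) i).factorial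
          = p ^ r := by
      rintro ⟨a, ha1, ha2⟩
      have hmulsucc : (a.1 + 1) * p ^ r = (a.1 + 1) * (p ^ r - 1) + (a.1 + 1) := by
        rw [← Nat.mul_succ]; congr 1; omega
      set b : Fin n := ⟨n - (a.1 + 1) * (p ^ r - 1) - 1, by omega⟩ with hb
      have hbv : b.1 = n - (a.1 + 1) * (p ^ r - 1) - 1 := rfl
      have hab : a ≠ b := by
        intro h
        apply ha2
        have : a.1 = b.1 := congrArg Fin.val h
        omega
      have hfeq : ∀ i : Fin n, (if i = a then p ^ r - 1
            else if i.1 + 1 = n - (a.1 + 1) * (p ^ r - 1) then 1 else 0)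
          = (if i = a then p ^ r - 1 else if i = b then 1 else 0) := by
        intro i
        by_cases hia : i = a
        · simp [hia]
        · simp only [if_neg hia]
          have : (i.1 + 1 = n - (a.1 + 1) * (p ^ r - 1)) ↔ i = b := by
            rw [Fin.ext_iff, hbv]
            omega
          by_cases hib : i = b
          · rw [if_pos (this.mpr hib), if_pos hib]
          · rw [if_neg (fun h => hib (this.mp h)), if_neg hib]
      simp only [hfeq]
      exact mk_member hpr a b hab (by omega)
    -- done hGmem
    set G : {a : Fin n // (a.1 + 1) * (p ^ r - 1) < n ∧ (a.1 + 1) * p ^ r ≠ n} →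
        {f : Fin n → ℕ //
          (∑ i, f i) = p ^ r ∧ (∑ i : Fin n, (i.1 + 1) * f i) = n ∧
          (∑ i, f i).factorial / ∏ i, (f i).factorial = p ^ r} :=
      fun x => ⟨fun i => if i = x.1 then p ^ r - 1
          else if i.1 + 1 = n - (x.1.1 + 1) * (p ^ r - 1) then 1 else 0, hGmem x⟩ with hG
    have hval : ∀ x i, (G x).1 i = if i = x.1 then p ^ r - 1
        else if i.1 + 1 = n - (x.1.1 + 1) * (p ^ r - 1) then 1 else 0 := fun x i => rfl
    have hGbij : Function.Bijective G := by
      constructor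
      · rintro x y hxy
        have hfuns := congrArg Subtype.val hxy
        have hx : (G x).1 x.1 = (G y).1 x.1 := congrFun hfuns x.1
        rw [hval, hval, if_pos rfl] at hx
        by_contra hne
        have hne1 : x.1 ≠ y.1 := fun h => hne (Subtype.ext h)
        rw [if_neg hne1] at hx
        by_cases h2 : x.1.1 + 1 = n - (y.1.1 + 1) * (p ^ r - 1)
        · rw [if_pos h2] at hx; omega
        · rw [if_neg h2] at hx; omega
      · rintro ⟨f, h1, h2, h3⟩
        obtain ⟨-, a, b, hab, hfa, hfb, hout, hcon⟩ :=
          member_struct hp hn (by omega) hr hpr f h1 h2 h3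
        have hbT : (b.1 + 1) * (p ^ r - 1) < n ∧ (b.1 + 1) * p ^ r ≠ n := by
          have hmulsucc : (b.1 + 1) * p ^ r = (b.1 + 1) * (p ^ r - 1) + (b.1 + 1) := by
            rw [← Nat.mul_succ]; congr 1; omega
          constructor
          · omega
          · intro h
            apply hab
            apply Fin.ext
            omega
        refine ⟨⟨b, hbT⟩, ?_⟩
        apply Subtype.ext
        funext i
        rw [hval]
        rw [show (⟨b, hbT⟩ : {a : Fin n //
          (a.1 + 1) * (p ^ r - 1) < n ∧ (a.1 + 1) * p ^ r ≠ n}).1 = b from rfl]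
        show _ = f i
        by_cases hib : i = b
        · rw [if_pos hib, hib, hfb]
        · rw [if_neg hib]
          by_cases hia : i = a
          · rw [if_pos (by rw [hia]; omega), hia, hfa]
          · rw [if_neg (by
              intro h
              apply hia
              apply Fin.ext
              omega), hout i hia hib]
    rw [← Nat.card_eq_of_bijective G hGbij, Nat.card_eq_fintype_card, Fintype.card_subtype]
    have hbridge : (Finset.univ.filter (fun a : Fin n =>
          (a.1 + 1) * (p ^ r - 1) < n ∧ (a.1 + 1) * p ^ r ≠ n)).card
        = ((Finset.range n).filter (fun a =>
          (a + 1) * (p ^ r - 1) < n ∧ (a + 1) * p ^ r ≠ n)).card := by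
      rw [Finset.card_filter, Finset.card_filter]
      exact Fin.sum_univ_eq_sum_range
        (fun a => if (a + 1) * (p ^ r - 1) < n ∧ (a + 1) * p ^ r ≠ n then 1 else 0) n
    rw [hbridge, count_range hn hpr]
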